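/- For every integer n ≥ 1, ∑_{i=1}^{n} i·2^{n−i} + ∑_{i=1}^{n−2} i·(n−1−i)·2^{n−2−i} = n·2^{n−1}, where the second sum is empty (equal to 0) when n ≤ 2. -/
import Mathlib

lemma sumA (n : ℕ) :
    (∑ i ∈ Finset.Icc 1 n, i * 2 ^ (n - i)) + (n + 2) = 2 ^ (n + 1) := by
  induction n with
  | zero => simp
  | succ n ih =>
    rw [Finset.sum_Icc_succ_top (by omega : 1 ≤ n + 1)]
    have : (∑ i ∈ Finset.Icc 1 n, i * 2 ^ (n + 1 - i))
        = ∑ i ∈ Finset.Icc 1 n, 2 * (i * 2 ^ (n - i)) := by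
      apply Finset.sum_congr rfl
      intro i hi
      simp only [Finset.mem_Icc] at hi
      have : n + 1 - i = (n - i) + 1 := by omega
      rw [this, pow_succ]; ring
    rw [this, ← Finset.mul_sum]
    simp only [Nat.sub_self, pow_zero, mul_one]
    omega

lemma sumB (m : ℕ) :
    (∑ i ∈ Finset.Icc 1 m, i * (m + 1 - i) * 2 ^ (m - i)) + 2 ^ (m + 3)
      = (m + 2) * 2 ^ (m + 1) + m + 4 := by
  induction m with
  | zero => simp
  | succ m ih =>
    rw [Finset.sum_Icc_succ_top (by omega : 1 ≤ m + 1)]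
    have : (∑ i ∈ Finset.Icc 1 m, i * (m + 1 + 1 - i) * 2 ^ (m + 1 - i))
        = ∑ i ∈ Finset.Icc 1 m,
            (2 * (i * (m + 1 - i) * 2 ^ (m - i)) + 2 * (i * 2 ^ (m - i))) := by
      apply Finset.sum_congr rfl
      intro i hi
      simp only [Finset.mem_Icc] at hi
      have h1 : m + 1 + 1 - i = (m + 1 - i) + 1 := by omega
      have h2 : m + 1 - i = (m - i) + 1 := by omega
      rw [h1, h2, pow_succ]; ring
    rw [this, Finset.sum_add_distrib, ← Finset.mul_sum, ← Finset.mul_sum]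
    have hA := sumA m
    simp only [Nat.sub_self, Nat.add_sub_cancel, pow_zero, mul_one,
      show m + 1 + 1 - (m + 1) = 1 from by omega]
    zify at ih hA ⊢
    linear_combination 2 * ih + 2 * hA

theorem sum_mul_two_pow' (n : ℕ) (hn : 1 ≤ n) :
    (∑ i ∈ Finset.Icc 1 n, i * 2 ^ (n - i)) +
      (∑ i ∈ Finset.Icc 1 (n - 2), i * (n - 1 - i) * 2 ^ (n - 2 - i)) =
    n * 2 ^ (n - 1) := by
  match n, hn with
  | 1, _ => simp
  | 2, _ => simp [Finset.sum_Icc_succ_top]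
  | (m + 3), _ =>
    have hA := sumA (m + 3)
    have hB := sumB (m + 1)
    have e1 : m + 3 - 2 = m + 1 := by omega
    have e2 : m + 3 - 1 = m + 2 := by omega
    rw [e1, e2]
    have : (∑ i ∈ Finset.Icc 1 (m + 1), i * (m + 2 - i) * 2 ^ (m + 1 - i))
        = ∑ i ∈ Finset.Icc 1 (m + 1), i * (m + 1 + 1 - i) * 2 ^ (m + 1 - i) := by
      apply Finset.sum_congr rfl; intro i hi; congr 2 <;> omega
    rw [this]
    zify at hA hB ⊢
    linear_combination hA + hB
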